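/- Let A be an envy-freeable allocation and K = i_1 → i_2 → ... → i_h → i_1 a directed cycle in the envy graph G_A of total weight zero. Define the permutation σ̂ by σ̂(i_a) = i_{a+1} (indices mod h) on cycle vertices and σ̂(x) = x otherwise. Then the reassigned allocation A_{σ̂} has the same social welfare as A and is therefore also envy-freeable. -/
import Mathlib


/-- Let `A` be an envy-freeable allocation (it maximizes social
welfare over all reassignments of its bundles) and let
`K = c 0 → c 1 → ... → c h → c 0` be a directed cycle of distinct vertices in the
envy graph `G_A` of total weight zero. Let `σ̂` be the permutation mapping each
cycle vertex to its successor and fixing all other agents. Then the reassigned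
allocation `A_σ̂` has the same social welfare as `A` and is also envy-freeable. -/
theorem zero_cycle_reassignment_envy_freeable {n m h : ℕ}
    (v : Fin n → Finset (Fin m) → ℝ)
    (A : Fin n → Finset (Fin m))
    (hdisj : ∀ i j, i ≠ j → Disjoint (A i) (A j))
    (hAfreeable : ∀ τ : Equiv.Perm (Fin n),
        ∑ i, v i (A (τ i)) ≤ ∑ i, v i (A i))
    (c : Fin (h + 1) → Fin n) (hc : Function.Injective c)
    (hcycle : ∑ a : Fin (h + 1), (v (c a) (A (c (a + 1))) - v (c a) (A (c a))) = 0)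
    (σ : Equiv.Perm (Fin n))
    (hσcycle : ∀ a : Fin (h + 1), σ (c a) = c (a + 1))
    (hσfix : ∀ x : Fin n, (∀ a : Fin (h + 1), x ≠ c a) → σ x = x) :
    (∑ i, v i (A (σ i)) = ∑ i, v i (A i)) ∧
    (∀ τ : Equiv.Perm (Fin n),
        ∑ i, v i (A (σ (τ i))) ≤ ∑ i, v i (A (σ i))) := by
  have key : ∑ i, (v i (A (σ i)) - v i (A i)) = 0 := by
    rw [← Finset.sum_subset (Finset.subset_univ (Finset.image c Finset.univ))]
    · rw [Finset.sum_image (fun a _ b _ hab => hc hab)]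
      rw [← hcycle]
      exact Finset.sum_congr rfl (fun a _ => by rw [hσcycle a])
    · intro x _ hx
      have hne : ∀ a : Fin (h + 1), x ≠ c a := by
        intro a hxa
        exact hx (hxa ▸ Finset.mem_image_of_mem c (Finset.mem_univ a))
      rw [hσfix x hne, sub_self]
  have heq : ∑ i, v i (A (σ i)) = ∑ i, v i (A i) := by
    have := Finset.sum_sub_distrib (s := Finset.univ)
      (f := fun i => v i (A (σ i))) (g := fun i => v i (A i))
    rw [this] at key
    linarith
  refine ⟨heq, fun τ => ?_⟩
  rw [heq]
  calc ∑ i, v i (A (σ (τ i))) = ∑ i, v i (A ((σ * τ) i)) := rfl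
    _ ≤ ∑ i, v i (A i) := hAfreeable (σ * τ)
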